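/- Let U ⊆ ℂᵐ be open, let F : U → ℂⁿ be holomorphic satisfying the conformality condition, and let f = Re ∘ F : U → ℝⁿ, with real differential df(z)(v) = Re(DF(z)(v)). Define the fundamental 2-form α by α(z)(v, w) = ⟨df(z)(i·v), df(z)(w)⟩ for z ∈ U, v, w ∈ ℂᵐ. Then α is closed: for every z ∈ U and all u, v, w ∈ ℂᵐ, D_u[α(·)(v,w)](z) + D_v[α(·)(w,u)](z) + D_w[α(·)(u,v)](z) = 0, where D_u[α(·)(v,w)](z) denotes the directional derivative at z in direction u of the real-valued function z' ↦ α(z')(v,w). -/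

import Mathlib

set_option maxHeartbeats 2000000

open Complex Metric

private lemma rep_lemma (m n : ℕ) {U : Set (Fin m → ℂ)} (hU : IsOpen U)
    {F : (Fin m → ℂ) → (Fin n → ℂ)} (hF : DifferentiableOn ℂ F U)
    (y b : Fin m → ℂ) (ρ : ℝ) (hρ : 0 < ρ)
    (hsub : ∀ t : ℂ, ‖t‖ ≤ ρ → y + t • b ∈ U) :
    fderiv ℂ F y b
      = (2 * Real.pi * Complex.I : ℂ)⁻¹ •
        ∮ w in C(0, ρ), w⁻¹ • w⁻¹ • F (y + w • b) := by
  have hslice : DifferentiableOn ℂ (fun t : ℂ => F (y + t • b)) (closedBall 0 ρ) := by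
    intro t ht
    rw [mem_closedBall_zero_iff] at ht
    have h1 : DifferentiableAt ℂ (fun t : ℂ => y + t • b) t :=
      ((differentiableAt_id).smul_const b).const_add y
    exact ((hF.differentiableAt (hU.mem_nhds (hsub t ht))).comp t h1).differentiableWithinAt
  have hslice' : DifferentiableOn ℂ (fun t : ℂ => F (y + t • b))
      (closedBall 0 ((⟨ρ, hρ.le⟩ : NNReal) : ℝ)) := hslice
  have hps := (hslice'.hasFPowerSeriesOnBall (by exact_mod_cast hρ)).hasFPowerSeriesAt
  have hda : HasDerivAt (fun t : ℂ => F (y + t • b)) (fderiv ℂ F y b) 0 := by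
    have h1 : HasDerivAt (fun t : ℂ => y + t • b) b 0 := by
      simpa using ((hasDerivAt_id (0:ℂ)).smul_const b).const_add y
    have h2 : HasFDerivAt F (fderiv ℂ F y) y :=
      (hF.differentiableAt (hU.mem_nhds (by simpa using hsub 0 (by simp [hρ.le])))).hasFDerivAt
    have h2' : HasFDerivAt F (fderiv ℂ F y) (y + (0:ℂ) • b) := by simpa using h2
    exact h2'.comp_hasDerivAt 0 h1
  have hd := hda.deriv
  rw [← hd, hps.deriv, cauchyPowerSeries_apply]
  simp only [sub_zero, pow_one, one_div, NNReal.coe_mk]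
  rfl

private lemma opnorm_le_aux (m n : ℕ) (L : (Fin m → ℂ) →L[ℂ] (Fin n → ℂ)) (C : ℝ) (hC : 0 ≤ C)
    (h : ∀ j, ‖L (Pi.single j 1)‖ ≤ C) : ‖L‖ ≤ m * C := by
  refine L.opNorm_le_bound (by positivity) fun v => ?_
  have hv : L v = ∑ j, v j • L (Pi.single j 1) := by
    have : v = ∑ j, v j • (Pi.single j (1:ℂ) : Fin m → ℂ) := by
      funext k
      simp [Pi.single_apply, Finset.sum_apply]
    conv_lhs => rw [this]
    simp
  rw [hv]
  calc ‖∑ j, v j • L (Pi.single j 1)‖ ≤ ∑ j, ‖v j • L (Pi.single j 1)‖ :=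
        norm_sum_le _ _
    _ ≤ ∑ _j : Fin m, C * ‖v‖ := by
        refine Finset.sum_le_sum fun j _ => ?_
        rw [norm_smul]
        calc ‖v j‖ * ‖L (Pi.single j 1)‖ ≤ ‖v‖ * C := by
              apply mul_le_mul (norm_le_pi_norm v j) (h j) (norm_nonneg _) (norm_nonneg _)
          _ = C * ‖v‖ := mul_comm _ _
    _ = ↑m * C * ‖v‖ := by simp [Finset.sum_const, mul_assoc]

private lemma crux (m n : ℕ) {U : Set (Fin m → ℂ)} (hU : IsOpen U)
    {F : (Fin m → ℂ) → (Fin n → ℂ)} (hF : DifferentiableOn ℂ F U)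
    {z : Fin m → ℂ} (hz : z ∈ U) (a : Fin m → ℂ) :
    DifferentiableAt ℂ (fun z' => fderiv ℂ F z' a) z := by
  obtain ⟨δ, δpos, hδ⟩ := Metric.isOpen_iff.mp hU z hz
  set R : ℝ := 1 + ‖a‖ with hRdef
  have hR1 : 1 ≤ R := by simp [hRdef, norm_nonneg]
  have hRa : ‖a‖ ≤ R := by simp [hRdef]
  have hRpos : 0 < R := lt_of_lt_of_le one_pos hR1
  set ε : ℝ := δ / (4 * R) with hεdef
  have hεpos : 0 < ε := by rw [hεdef]; positivity
  have h3ε : Metric.closedBall z (3 * ε * R) ⊆ U := by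
    refine (Metric.closedBall_subset_ball ?_).trans hδ
    have h1 : 3 * (δ / (4 * R)) * R = 3 / 4 * δ := by field_simp
    show 3 * (δ / (4 * R)) * R < δ
    rw [h1]; linarith
  obtain ⟨M, hM⟩ := (isCompact_closedBall z (3 * ε * R)).exists_bound_of_continuousOn
      (hF.continuousOn.mono h3ε)
  have hM0 : 0 ≤ M := le_trans (norm_nonneg (F z)) (hM z (Metric.mem_closedBall_self (by positivity)))
  have hmem2U : ∀ y ∈ Metric.closedBall z (2 * ε * R), ∀ (b : Fin m → ℂ), ‖b‖ ≤ 1 →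
      ∀ t : ℂ, ‖t‖ ≤ ε → y + t • b ∈ Metric.closedBall z (3 * ε * R) := by
    intro y hy b hb t ht
    rw [Metric.mem_closedBall] at hy ⊢
    have h1 : y + t • b - z = (y - z) + t • b := by abel
    rw [dist_eq_norm] at hy ⊢
    rw [h1]
    have h2 : ‖t • b‖ ≤ ε := by
      rw [norm_smul]
      calc ‖t‖ * ‖b‖ ≤ ε * 1 := mul_le_mul ht hb (norm_nonneg _) hεpos.le
        _ = ε := mul_one _
    calc ‖(y - z) + t • b‖ ≤ ‖y - z‖ + ‖t • b‖ := norm_add_le _ _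
      _ ≤ 2 * ε * R + ε := add_le_add hy h2
      _ ≤ 3 * ε * R := by nlinarith
  have hbound_dir : ∀ y ∈ Metric.closedBall z (2 * ε * R), ∀ j : Fin m,
      ‖fderiv ℂ F y (Pi.single j 1)‖ ≤ M / ε := by
    intro y hy j
    have hb1 : ‖(Pi.single j 1 : Fin m → ℂ)‖ ≤ 1 := by
      refine (pi_norm_le_iff_of_nonneg zero_le_one).mpr fun k => ?_
      rcases eq_or_ne k j with h|h <;> simp [Pi.single_apply, h]
    have hrep := rep_lemma m n hU hF y (Pi.single j 1) ε hεpos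
        (fun t ht => h3ε (hmem2U y hy _ hb1 t ht))
    rw [hrep]
    refine le_trans (circleIntegral.norm_two_pi_i_inv_smul_integral_le_of_norm_le_const
      (C := ε⁻¹ * (ε⁻¹ * M)) hεpos.le ?_) ?_
    · intro w hw
      rw [mem_sphere_zero_iff_norm] at hw
      have hFb := hM _ (hmem2U y hy _ hb1 w (by rw [hw]))
      rw [norm_smul, norm_smul, norm_inv, hw]
      have h0 : 0 ≤ ε⁻¹ := by positivity
      exact mul_le_mul_of_nonneg_left (mul_le_mul_of_nonneg_left hFb h0) h0
    · rw [show ε * (ε⁻¹ * (ε⁻¹ * M)) = M / ε by field_simp]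
  have hbound_op : ∀ y ∈ Metric.closedBall z (2 * ε * R), ‖fderiv ℂ F y‖ ≤ m * (M / ε) :=
    fun y hy => opnorm_le_aux m n _ _ (by positivity) (hbound_dir y hy)
  have hsub2 : Metric.closedBall z (2 * ε * R) ⊆ U :=
    (Metric.closedBall_subset_closedBall (by nlinarith)).trans h3ε
  have hmemx : ∀ x ∈ Metric.ball z (ε * R), ∀ t : ℂ, ‖t‖ ≤ ε →
      x + t • a ∈ Metric.closedBall z (2 * ε * R) := by
    intro x hx t ht
    rw [Metric.mem_ball] at hx
    rw [Metric.mem_closedBall]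
    have h1 : x + t • a - z = (x - z) + t • a := by abel
    rw [dist_eq_norm] at hx ⊢
    rw [h1]
    have h2 : ‖t • a‖ ≤ ε * R := by
      rw [norm_smul]
      exact mul_le_mul ht hRa (norm_nonneg _) hεpos.le
    calc ‖(x - z) + t • a‖ ≤ ‖x - z‖ + ‖t • a‖ := norm_add_le _ _
      _ ≤ ε * R + ε * R := add_le_add hx.le h2
      _ = 2 * ε * R := by ring
  have hcmnorm : ∀ θ : ℝ, ‖circleMap 0 ε θ‖ = ε := by
    intro θ
    rw [norm_circleMap_zero, abs_of_pos hεpos]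
  have hcne : ∀ θ : ℝ, circleMap 0 ε θ ≠ 0 := by
    intro θ
    simpa using circleMap_ne_center (c := (0:ℂ)) (R := ε) hεpos.ne' (θ := θ)
  set K : ℝ → ℂ := fun θ => deriv (circleMap 0 ε) θ *
      ((circleMap 0 ε θ)⁻¹ * (circleMap 0 ε θ)⁻¹) with hK
  set Ψ : (Fin m → ℂ) → ℝ → (Fin n → ℂ) := fun x θ =>
      deriv (circleMap 0 ε) θ • ((circleMap 0 ε θ)⁻¹ •
        ((circleMap 0 ε θ)⁻¹ • F (x + circleMap 0 ε θ • a))) with hΨ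
  have hΨK : ∀ x θ, Ψ x θ = K θ • F (x + circleMap 0 ε θ • a) := by
    intro x θ
    simp [hΨ, hK, smul_smul, mul_assoc]
  set Ψ' : (Fin m → ℂ) → ℝ → ((Fin m → ℂ) →L[ℂ] (Fin n → ℂ)) := fun x θ =>
      K θ • fderiv ℂ F (x + circleMap 0 ε θ • a) with hΨ'
  have hKnorm : ∀ θ, ‖K θ‖ = ε⁻¹ := by
    intro θ
    show ‖deriv (circleMap 0 ε) θ * ((circleMap 0 ε θ)⁻¹ * (circleMap 0 ε θ)⁻¹)‖ = ε⁻¹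
    simp only [deriv_circleMap, norm_mul, norm_inv, Complex.norm_I, hcmnorm θ]
    field_simp
  have hcontF : ∀ x ∈ Metric.ball z (ε * R), Continuous (fun θ : ℝ => F (x + circleMap 0 ε θ • a)) := by
    intro x hx
    refine hF.continuousOn.comp_continuous
      (continuous_const.add ((continuous_circleMap 0 ε).smul continuous_const)) ?_
    intro θ
    exact hsub2 (hmemx x hx _ (by rw [hcmnorm]))
  have hcont : ∀ x ∈ Metric.ball z (ε * R), Continuous (Ψ x) := by
    intro x hx
    rw [hΨ]
    have h1 : Continuous (fun θ : ℝ => deriv (circleMap 0 ε) θ) := by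
      have : (fun θ : ℝ => deriv (circleMap 0 ε) θ) = fun θ => circleMap 0 ε θ * Complex.I := by
        funext θ; exact deriv_circleMap 0 ε θ
      rw [this]
      exact (continuous_circleMap 0 ε).mul continuous_const
    have h2 : Continuous (fun θ : ℝ => (circleMap 0 ε θ)⁻¹) :=
      (continuous_circleMap 0 ε).inv₀ hcne
    exact h1.smul (h2.smul (h2.smul (hcontF x hx)))
  have hballpos : 0 < ε * R := by positivity
  have h_diff : ∀ θ : ℝ, ∀ x ∈ Metric.ball z (ε * R),
      HasFDerivAt (fun x' => Ψ x' θ) (Ψ' x θ) x := by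
    intro θ x hx
    have hyU : x + circleMap 0 ε θ • a ∈ U := hsub2 (hmemx x hx _ (by rw [hcmnorm]))
    have hFy : HasFDerivAt F (fderiv ℂ F (x + circleMap 0 ε θ • a)) (x + circleMap 0 ε θ • a) :=
      (hF.differentiableAt (hU.mem_nhds hyU)).hasFDerivAt
    have h1 : HasFDerivAt (fun x' => F (x' + circleMap 0 ε θ • a))
        (fderiv ℂ F (x + circleMap 0 ε θ • a)) x := by
      have := hFy.comp x ((hasFDerivAt_id x).add_const (circleMap 0 ε θ • a))
      simpa using this
    have h2 := h1.const_smul (K θ)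
    have h3 : (fun x' => Ψ x' θ) = fun x' => K θ • F (x' + circleMap 0 ε θ • a) := by
      funext x'; exact hΨK x' θ
    rw [h3]
    exact h2
  have h_bound : ∀ θ : ℝ, ∀ x ∈ Metric.ball z (ε * R),
      ‖Ψ' x θ‖ ≤ ε⁻¹ * (m * (M / ε)) := by
    intro θ x hx
    show ‖K θ • fderiv ℂ F (x + circleMap 0 ε θ • a)‖ ≤ ε⁻¹ * (↑m * (M / ε))
    refine le_trans (norm_smul_le (K θ) (fderiv ℂ F (x + circleMap 0 ε θ • a))) ?_
    rw [hKnorm]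
    exact mul_le_mul_of_nonneg_left
      (hbound_op _ (hmemx x hx _ (by rw [hcmnorm]))) (by positivity)
  have hF_meas : ∀ᶠ x in nhds z, MeasureTheory.AEStronglyMeasurable (Ψ x)
      (MeasureTheory.volume.restrict (Set.uIoc (0:ℝ) (2 * Real.pi))) := by
    filter_upwards [Metric.ball_mem_nhds z hballpos] with x hx
    exact (hcont x hx).aestronglyMeasurable
  have hF_int : IntervalIntegrable (Ψ z) MeasureTheory.volume 0 (2 * Real.pi) :=
    (hcont z (Metric.mem_ball_self hballpos)).intervalIntegrable 0 (2 * Real.pi)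
  have hF'_meas : MeasureTheory.AEStronglyMeasurable (Ψ' z)
      (MeasureTheory.volume.restrict (Set.uIoc (0:ℝ) (2 * Real.pi))) := by
    have m1 : Measurable (fun θ : ℝ => fderiv ℂ F (z + circleMap 0 ε θ • a)) :=
      (measurable_fderiv ℂ F).comp
        (continuous_const.add ((continuous_circleMap 0 ε).smul continuous_const)).measurable
    have m2 : Continuous K := by
      have h1 : Continuous (fun θ : ℝ => deriv (circleMap 0 ε) θ) := by
        have heq : (fun θ : ℝ => deriv (circleMap 0 ε) θ)
            = fun θ => circleMap 0 ε θ * Complex.I := by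
          funext θ; exact deriv_circleMap 0 ε θ
        rw [heq]
        exact (continuous_circleMap 0 ε).mul continuous_const
      exact h1.mul (((continuous_circleMap 0 ε).inv₀ hcne).mul
        ((continuous_circleMap 0 ε).inv₀ hcne))
    exact m2.aestronglyMeasurable.smul m1.aestronglyMeasurable
  have hmain := intervalIntegral.hasFDerivAt_integral_of_dominated_of_fderiv_le
    (μ := MeasureTheory.volume) (a := (0:ℝ)) (b := 2 * Real.pi)
    (F := Ψ) (F' := Ψ') (x₀ := z)
    (bound := fun _ => ε⁻¹ * (m * (M / ε))) (Metric.ball_mem_nhds z hballpos) hF_meas hF_int hF'_meas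
    (Filter.Eventually.of_forall fun θ _ => fun x hx => h_bound θ x hx)
    intervalIntegrable_const
    (Filter.Eventually.of_forall fun θ _ => fun x hx => h_diff θ x hx)
  have hconst := hmain.const_smul ((2 * Real.pi * Complex.I : ℂ)⁻¹)
  have heq : (fun z' => fderiv ℂ F z' a) =ᶠ[nhds z]
      (fun x => (2 * Real.pi * Complex.I : ℂ)⁻¹ • ∫ θ in (0:ℝ)..(2 * Real.pi), Ψ x θ) := by
    filter_upwards [Metric.ball_mem_nhds z hballpos] with x hx
    have hsubx : ∀ t : ℂ, ‖t‖ ≤ ε → x + t • a ∈ U := fun t ht => hsub2 (hmemx x hx t ht)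
    rw [rep_lemma m n hU hF x a ε hεpos hsubx]
    congr 1
  exact hconst.differentiableAt.congr_of_eventuallyEq heq

private lemma crux2 (m n : ℕ) {U : Set (Fin m → ℂ)} (hU : IsOpen U)
    {F : (Fin m → ℂ) → (Fin n → ℂ)} (hF : DifferentiableOn ℂ F U)
    {z : Fin m → ℂ} (hz : z ∈ U) :
    DifferentiableAt ℂ (fderiv ℂ F) z := by
  have hrepr : (fderiv ℂ F) = fun z' => ∑ j : Fin m,
      (ContinuousLinearMap.smulRightL ℂ (Fin m → ℂ) (Fin n → ℂ)
        (ContinuousLinearMap.proj j)) (fderiv ℂ F z' (Pi.single j 1)) := by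
    funext z'
    refine ContinuousLinearMap.ext fun v => ?_
    have hv : v = ∑ j, v j • (Pi.single j (1:ℂ) : Fin m → ℂ) := by
      funext k
      simp [Pi.single_apply, Finset.sum_apply]
    conv_lhs => rw [hv]
    simp [ContinuousLinearMap.smulRightL, ContinuousLinearMap.sum_apply]
  rw [hrepr]
  refine DifferentiableAt.fun_sum fun j _ => ?_
  exact (ContinuousLinearMap.smulRightL ℂ (Fin m → ℂ) (Fin n → ℂ)
    (ContinuousLinearMap.proj j)).differentiableAt.comp z (crux m n hU hF hz _)

/-- For a holomorphic `F : U → ℂⁿ` satisfying the conformality condition, the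
fundamental 2-form `α(z)(v,w) = ⟨df(z)(i·v), df(z)(w)⟩` of the pullback metric of
`f = Re ∘ F` is closed: the cyclic sum of its directional derivatives vanishes. -/
theorem fundamental_two_form_closed
    (m n : ℕ) (U : Set (Fin m → ℂ)) (hU : IsOpen U)
    (F : (Fin m → ℂ) → (Fin n → ℂ)) (hF : DifferentiableOn ℂ F U)
    (hconf : ∀ z ∈ U, ∀ v w : Fin m → ℂ,
      ∑ i, fderiv ℂ F z v i * fderiv ℂ F z w i = 0)
    (df : (Fin m → ℂ) → (Fin m → ℂ) → EuclideanSpace ℝ (Fin n))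
    (hdf : ∀ z v, df z v = fun i => (fderiv ℂ F z v i).re)
    (α : (Fin m → ℂ) → (Fin m → ℂ) → (Fin m → ℂ) → ℝ)
    (hα : ∀ z v w, α z v w =
      @inner ℝ (EuclideanSpace ℝ (Fin n)) _ (df z (Complex.I • v)) (df z w)) :
    ∀ z ∈ U, ∀ u v w : Fin m → ℂ,
      fderiv ℝ (fun z' => α z' v w) z u +
        fderiv ℝ (fun z' => α z' w u) z v +
        fderiv ℝ (fun z' => α z' u v) z w = 0 := by
  intro z hz u v w
  set G := fderiv ℂ F with hG
  have hGz : DifferentiableAt ℂ G z := crux2 m n hU hF hz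
  have hGd : HasFDerivAt G (fderiv ℂ G z) z := hGz.hasFDerivAt
  set G' := fderiv ℂ G z with hG'
  have hFev : ∀ᶠ y in nhds z, HasFDerivAt F (G y) y := by
    filter_upwards [hU.mem_nhds hz] with y hy
    exact (hF.differentiableAt (hU.mem_nhds hy)).hasFDerivAt
  have hsymm : ∀ p q : Fin m → ℂ, G' p q = G' q p :=
    fun p q => second_derivative_symmetric_of_eventually hFev hGd p q
  -- pointwise rewriting of α
  have hαfun : ∀ a b : Fin m → ℂ, (fun z' => α z' a b)
      = fun z' => ∑ i, -(G z' a i).im * (G z' b i).re := by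
    intro a b; funext z'
    rw [hα]
    rw [PiLp.inner_apply, hdf, hdf]
    refine Finset.sum_congr rfl fun i _ => ?_
    have hs : G z' (Complex.I • a) = Complex.I • (G z' a) := (G z').map_smul _ _
    simp [hs, RCLike.inner_apply, Complex.mul_re, mul_comm]
  -- basic directional derivative CLMs
  have hGa : ∀ (a : Fin m → ℂ) (i : Fin n), HasFDerivAt (fun z' => G z' a i)
      ((ContinuousLinearMap.proj i).comp
        (((ContinuousLinearMap.apply ℂ (Fin n → ℂ)) a).comp G')) z := by
    intro a i
    have h1 := ((ContinuousLinearMap.apply ℂ (Fin n → ℂ)) a).hasFDerivAt.comp z hGd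
    exact (ContinuousLinearMap.proj i).hasFDerivAt.comp z h1
  have key : ∀ a b c : Fin m → ℂ, fderiv ℝ (fun z' => α z' a b) z c
      = ∑ i, (-(G z a i).im * (G' c b i).re + (G z b i).re * (-(G' c a i).im)) := by
    intro a b c
    have hterm : ∀ i : Fin n, HasFDerivAt (fun z' => -(G z' a i).im * (G z' b i).re)
        ((-(G z a i).im) •
            (Complex.reCLM.comp ((((ContinuousLinearMap.proj i).comp
              (((ContinuousLinearMap.apply ℂ (Fin n → ℂ)) b).comp G'))).restrictScalars ℝ))
          + (G z b i).re •
            (-(Complex.imCLM.comp ((((ContinuousLinearMap.proj i).comp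
              (((ContinuousLinearMap.apply ℂ (Fin n → ℂ)) a).comp G'))).restrictScalars ℝ)))) z := by
      intro i
      have him : HasFDerivAt (fun z' => -(G z' a i).im)
          (-(Complex.imCLM.comp ((((ContinuousLinearMap.proj i).comp
            (((ContinuousLinearMap.apply ℂ (Fin n → ℂ)) a).comp G'))).restrictScalars ℝ))) z :=
        (Complex.imCLM.hasFDerivAt.comp z ((hGa a i).restrictScalars ℝ)).neg
      have hre : HasFDerivAt (fun z' => (G z' b i).re)
          (Complex.reCLM.comp ((((ContinuousLinearMap.proj i).comp
            (((ContinuousLinearMap.apply ℂ (Fin n → ℂ)) b).comp G'))).restrictScalars ℝ)) z :=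
        Complex.reCLM.hasFDerivAt.comp z ((hGa b i).restrictScalars ℝ)
      exact him.mul hre
    have hsum := HasFDerivAt.fun_sum (fun i (_ : i ∈ Finset.univ) => hterm i)
    rw [hαfun a b, hsum.fderiv]
    simp [ContinuousLinearMap.sum_apply, ContinuousLinearMap.add_apply,
      ContinuousLinearMap.coe_smul', ContinuousLinearMap.neg_apply,
      ContinuousLinearMap.coe_comp', ContinuousLinearMap.coe_restrictScalars',
      ContinuousLinearMap.proj_apply, ContinuousLinearMap.apply_apply,
      Complex.reCLM_apply, Complex.imCLM_apply, smul_eq_mul, mul_comm]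
  -- derivative of the conformality relation
  have hrel : ∀ a b c : Fin m → ℂ,
      (∑ i, G' a b i * G z c i) + (∑ i, G' a c i * G z b i) = 0 := by
    intro a b c
    have hterm : ∀ i : Fin n, HasFDerivAt (fun z' => G z' b i * G z' c i)
        ((G z b i) • ((ContinuousLinearMap.proj i).comp
            (((ContinuousLinearMap.apply ℂ (Fin n → ℂ)) c).comp G'))
          + (G z c i) • ((ContinuousLinearMap.proj i).comp
            (((ContinuousLinearMap.apply ℂ (Fin n → ℂ)) b).comp G'))) z :=
      fun i => (hGa b i).mul (hGa c i)
    have hsum := HasFDerivAt.fun_sum (fun i (_ : i ∈ Finset.univ) => hterm i)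
    have h0 : (fun z' => ∑ i, G z' b i * G z' c i) =ᶠ[nhds z] (fun _ => (0:ℂ)) := by
      filter_upwards [hU.mem_nhds hz] with y hy using hconf y hy b c
    have h1 : fderiv ℂ (fun z' => ∑ i, G z' b i * G z' c i) z = 0 := by
      rw [h0.fderiv_eq]; exact fderiv_const_apply 0
    have h2 := hsum.fderiv
    rw [h1] at h2
    have h3 := DFunLike.congr_fun h2.symm a
    simp only [ContinuousLinearMap.sum_apply, ContinuousLinearMap.add_apply,
      ContinuousLinearMap.coe_smul', Pi.smul_apply,
      ContinuousLinearMap.coe_comp', Function.comp_apply,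
      ContinuousLinearMap.proj_apply, ContinuousLinearMap.apply_apply,
      ContinuousLinearMap.zero_apply, smul_eq_mul] at h3
    rw [← Finset.sum_add_distrib]
    rw [show (∑ i, (G' a b i * G z c i + G' a c i * G z b i))
        = ∑ i, (G z b i * G' a c i + G z c i * G' a b i) from
      Finset.sum_congr rfl fun i _ => by ring]
    exact h3
  -- the cyclic complex identity
  have e1 := hrel u v w
  have e2 := hrel v w u
  have e3 := hrel w u v
  rw [hsymm u w] at e1
  rw [hsymm v u] at e2
  rw [hsymm w v] at e3
  have hXYZ : (∑ i, G' u v i * G z w i) + (∑ i, G' v w i * G z u i)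
      + (∑ i, G' w u i * G z v i) = 0 := by
    linear_combination (e1 + e2 + e3) / 2
  have hXYZ' : ∑ i, (G' u v i * G z w i + G' v w i * G z u i + G' w u i * G z v i) = 0 := by
    rw [Finset.sum_add_distrib, Finset.sum_add_distrib]
    exact hXYZ
  have him : ∑ i, (G' u v i * G z w i + G' v w i * G z u i + G' w u i * G z v i).im = 0 := by
    have := congrArg Complex.im hXYZ'
    rwa [Complex.im_sum, Complex.zero_im] at this
  rw [key v w u, key w u v, key u v w, ← Finset.sum_add_distrib, ← Finset.sum_add_distrib]
  have hptw : ∀ i : Fin n,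
      (-(G z v i).im * (G' u w i).re + (G z w i).re * (-(G' u v i).im))
      + (-(G z w i).im * (G' v u i).re + (G z u i).re * (-(G' v w i).im))
      + (-(G z u i).im * (G' w v i).re + (G z v i).re * (-(G' w u i).im))
      = -((G' u v i * G z w i + G' v w i * G z u i + G' w u i * G z v i).im) := by
    intro i
    rw [show G' u w i = G' w u i from congrFun (hsymm u w) i,
        show G' v u i = G' u v i from congrFun (hsymm v u) i,
        show G' w v i = G' v w i from congrFun (hsymm w v) i]
    simp only [Complex.add_im, Complex.mul_im]
    ring
  rw [Finset.sum_congr rfl fun i _ => hptw i]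
  rw [Finset.sum_neg_distrib, him, neg_zero]
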